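/- Erdős space 𝔈 can be written as a countable union of sets that are each nowhere dense in 𝔈 and each a C-set in 𝔈: there exists a sequence (C_n) of subsets of 𝔈 with ⋃_n C_n = 𝔈 such that every C_n is nowhere dense in 𝔈 and is an intersection of clopen subsets of 𝔈. -/

import Mathlib

open Topology Filter Set

/-- A C-set in a topological space is an intersection of clopen subsets. -/
def IsCSet {X : Type*} [TopologicalSpace X] (C : Set X) : Prop :=
  ∃ 𝒮 : Set (Set X), (∀ s ∈ 𝒮, IsClopen s) ∧ C = ⋂₀ 𝒮

/-- Erdős space: the rational points of the real Hilbert space ℓ². -/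
def ErdosSpace : Set (lp (fun _ : ℕ => ℝ) 2) :=
  {x | ∀ n : ℕ, ∃ q : ℚ, x n = (q : ℝ)}

lemma eval0_continuous : Continuous fun x : lp (fun _ : ℕ => ℝ) 2 => x 0 := by
  refine (LipschitzWith.mk_one fun x y => ?_).continuous
  rw [dist_eq_norm, dist_eq_norm]
  have h := lp.norm_apply_le_norm (p := 2) (by norm_num) (x - y) 0
  simpa using h

lemma f_continuous : Continuous fun x : ↥ErdosSpace => (x : lp (fun _ : ℕ => ℝ) 2) 0 :=
  eval0_continuous.comp continuous_subtype_val

/-- Erdős space is a countable union of nowhere dense C-sets. -/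
theorem stmt10 :
    ∃ C : ℕ → Set ↥ErdosSpace,
      (⋃ n, C n) = Set.univ ∧
      ∀ n, IsNowhereDense (C n) ∧ IsCSet (C n) := by
  set f : ↥ErdosSpace → ℝ := fun x => (x : lp (fun _ : ℕ => ℝ) 2) 0 with hf
  refine ⟨fun n => {x | f x = ((Denumerable.ofNat ℚ n : ℚ) : ℝ)}, ?_, fun n => ?_⟩
  · ext x
    simp only [Set.mem_iUnion, Set.mem_univ, iff_true, Set.mem_setOf_eq]
    obtain ⟨q, hq⟩ := x.2 0
    obtain ⟨m, hm⟩ := (Denumerable.eqv ℚ).symm.surjective q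
    refine ⟨m, ?_⟩
    show (x : lp (fun _ : ℕ => ℝ) 2) 0 = _
    rw [hq]
    exact congrArg (fun r : ℚ => (r : ℝ)) hm.symm
  · set q : ℚ := Denumerable.ofNat ℚ n with hqdef
    have hclosed : IsClosed {x : ↥ErdosSpace | f x = (q : ℝ)} :=
      isClosed_singleton.preimage f_continuous
    constructor
    · -- nowhere dense
      rw [hclosed.isNowhereDense_iff]
      rw [Set.eq_empty_iff_forall_notMem]
      intro x hx
      have hxC : x ∈ {x : ↥ErdosSpace | f x = (q : ℝ)} := interior_subset hx
      rw [Set.mem_setOf_eq] at hxC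
      obtain ⟨ε, hε, hball⟩ := Metric.mem_nhds_iff.mp (mem_interior_iff_mem_nhds.mp hx)
      obtain ⟨δ, hδ0, hδε⟩ := exists_rat_btwn hε
      have hδ0' : (0 : ℝ) < (δ : ℝ) := hδ0
      -- perturb x in coordinate 0 by δ
      set z : lp (fun _ : ℕ => ℝ) 2 := (x : lp (fun _ : ℕ => ℝ) 2) + lp.single 2 0 (δ : ℝ)
        with hz
      have hzE : z ∈ ErdosSpace := by
        intro k
        obtain ⟨r, hr⟩ := x.2 k
        have hzk : z k = (x : lp (fun _ : ℕ => ℝ) 2) k + (lp.single (E := fun _ : ℕ => ℝ) 2 0 (δ : ℝ)) k := by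
          rw [hz]; simp
        rcases eq_or_ne k 0 with rfl | hk
        · refine ⟨r + δ, ?_⟩
          rw [hzk, lp.single_apply_self, hr]; push_cast; ring
        · refine ⟨r, ?_⟩
          rw [hzk, lp.single_apply_ne 2 0 _ hk, hr, add_zero]
      set y : ↥ErdosSpace := ⟨z, hzE⟩ with hy
      have hdist : dist y x < ε := by
        rw [Subtype.dist_eq, dist_eq_norm]
        have : z - (x : lp (fun _ : ℕ => ℝ) 2) = lp.single 2 0 (δ : ℝ) := by
          rw [hz]; abel
        rw [hy, this]
        have hns := lp.norm_single (E := fun _ : ℕ => ℝ) (p := 2) (by norm_num) 0 (δ : ℝ)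
        rw [hns]
        rw [Real.norm_eq_abs, abs_of_pos hδ0']
        exact hδε
      have hymem : y ∈ {x : ↥ErdosSpace | f x = (q : ℝ)} := hball (Metric.mem_ball.mpr hdist)
      have hy0 : f y = f x + (δ : ℝ) := by
        have hz0 : z 0 = (x : lp (fun _ : ℕ => ℝ) 2) 0 + (δ : ℝ) := by
          rw [hz]; simp [lp.single_apply_self]
        exact hz0
      rw [Set.mem_setOf_eq, hy0, hxC] at hymem
      linarith
    · -- C-set
      set S : ℕ → Set ↥ErdosSpace :=
        fun k => {x | |f x - (q : ℝ)| < Real.sqrt 2 / ((k : ℝ) + 1)} with hS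
      have hirr : ∀ k : ℕ, Irrational (Real.sqrt 2 / ((k : ℝ) + 1)) := by
        intro k
        have := irrational_sqrt_two.div_natCast (m := k + 1) (Nat.succ_ne_zero k)
        simpa [Nat.cast_add] using this
      have hpos : ∀ k : ℕ, 0 < Real.sqrt 2 / ((k : ℝ) + 1) := fun k =>
        div_pos (Real.sqrt_pos.mpr (by norm_num)) (by positivity)
      have hne : ∀ (k : ℕ) (x : ↥ErdosSpace), |f x - (q : ℝ)| ≠ Real.sqrt 2 / ((k : ℝ) + 1) := by
        intro k x h
        obtain ⟨r, hr⟩ := x.2 0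
        have h2 : |f x - (q : ℝ)| = ((|r - q| : ℚ) : ℝ) := by
          have : f x = ((r : ℚ) : ℝ) := hr
          rw [this, Rat.cast_abs, Rat.cast_sub]
        exact (hirr k) ⟨|r - q|, by rw [← h]; exact h2.symm⟩
      refine ⟨Set.range S, ?_, ?_⟩
      · rintro s ⟨k, rfl⟩
        constructor
        · -- closed: S k equals a closed preimage
          have : S k = f ⁻¹' (Metric.closedBall (q : ℝ) (Real.sqrt 2 / ((k : ℝ) + 1))) := by
            ext x
            simp only [hS, Set.mem_setOf_eq, Set.mem_preimage, Metric.mem_closedBall,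
              Real.dist_eq]
            constructor
            · exact le_of_lt
            · intro h
              exact lt_of_le_of_ne h (hne k x)
          rw [this]
          exact Metric.isClosed_closedBall.preimage f_continuous
        · -- open
          have : S k = f ⁻¹' (Metric.ball (q : ℝ) (Real.sqrt 2 / ((k : ℝ) + 1))) := by
            ext x
            simp [hS, Real.dist_eq]
          rw [this]
          exact Metric.isOpen_ball.preimage f_continuous
      · rw [Set.sInter_range]
        ext x
        simp only [Set.mem_setOf_eq, Set.mem_iInter, hS]
        constructor
        · intro h k
          rw [h, sub_self, abs_zero]
          exact hpos k
        · intro h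
          by_contra hne0
          have hd : 0 < |f x - (q : ℝ)| := abs_pos.mpr (sub_ne_zero.mpr hne0)
          obtain ⟨k, hk⟩ := exists_nat_gt (Real.sqrt 2 / |f x - (q : ℝ)|)
          have hk' : Real.sqrt 2 / ((k : ℝ) + 1) < |f x - (q : ℝ)| := by
            rw [div_lt_iff₀ (by positivity)]
            rw [div_lt_iff₀ hd] at hk
            nlinarith [hd]
          exact absurd (h k) (not_lt.mpr hk'.le)
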